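/- Riemann hypothesis for the Bartholdi zeta function: let G be a (t+1)-regular graph and u real with (1−u)(t+u) > 0. If every eigenvalue λ ≠ t+1 of the adjacency matrix satisfies λ² < 4(1−u)(t+u), then every pole q of ζ_G(q,u) other than q = ±(1−u)^{-1} and q = (t+u)^{-1} satisfies |q| = ((1−u)(t+u))^{-1/2}. -/

import Mathlib

open Matrix

/-- Riemann hypothesis for the Bartholdi zeta function: let `G` be a `(t+1)`-regular
connected simple graph and `u` real with `(1−u)(t+u) > 0`.  If every eigenvalue
`lam ≠ t+1` of the adjacency matrix satisfies `lam² < 4(1−u)(t+u)`, then every pole `q`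
of `ζ_G(q,u)` (i.e. every zero of
`f(q) = (1−(1−u)²q²)^(n_E−n_V) det((1+(1−u)(t+u)q²)·1 − qA)`)
other than `q = ±(1−u)⁻¹` and `q = (t+u)⁻¹` satisfies `|q| = ((1−u)(t+u))^(−1/2)`. -/
theorem bartholdi_riemann_hypothesis
    {V : Type*} [Fintype V] [DecidableEq V]
    (G : SimpleGraph V) [DecidableRel G.Adj]
    (hconn : G.Connected)
    (t : ℕ) (hreg : G.IsRegularOfDegree (t + 1))
    (u : ℝ) (hpos : 0 < (1 - u) * ((t : ℝ) + u))
    (heig : ∀ lam : ℝ, (∃ x : V → ℝ, x ≠ 0 ∧ G.adjMatrix ℝ *ᵥ x = lam • x) →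
      lam ≠ (t : ℝ) + 1 → lam ^ 2 < 4 * (1 - u) * ((t : ℝ) + u))
    (f : ℂ → ℂ)
    (hf : ∀ q : ℂ, f q =
      (1 - ((1 - u : ℝ) : ℂ) ^ 2 * q ^ 2) ^ (G.edgeFinset.card - Fintype.card V) *
        ((1 + ((1 - u : ℝ) : ℂ) * (((t : ℝ) + u : ℝ) : ℂ) * q ^ 2) • (1 : Matrix V V ℂ) -
          q • G.adjMatrix ℂ).det) :
    ∀ q : ℂ, f q = 0 →
      q ≠ (((1 - u : ℝ) : ℂ))⁻¹ →
      q ≠ -(((1 - u : ℝ) : ℂ))⁻¹ →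
      q ≠ ((((t : ℝ) + u : ℝ) : ℂ))⁻¹ →
      ‖q‖ = (Real.sqrt ((1 - u) * ((t : ℝ) + u)))⁻¹ := by
  intro q hq hq1 hq2 hq3
  have h1u : (1 - u : ℝ) ≠ 0 := by
    intro h; rw [h, zero_mul] at hpos; exact lt_irrefl 0 hpos
  have htu : ((t : ℝ) + u) ≠ 0 := by
    intro h; rw [h, mul_zero] at hpos; exact lt_irrefl 0 hpos
  rw [hf q] at hq
  rcases mul_eq_zero.mp hq with h | h
  · have h0 : (1 : ℂ) - ((1 - u : ℝ) : ℂ) ^ 2 * q ^ 2 = 0 := (pow_eq_zero_iff'.mp h).1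
    have h0' : ((1 : ℂ) - ((1 - u : ℝ) : ℂ) * q) * ((1 : ℂ) + ((1 - u : ℝ) : ℂ) * q) = 0 := by
      linear_combination h0
    rcases mul_eq_zero.mp h0' with h' | h'
    · exact absurd (eq_inv_of_mul_eq_one_left (by linear_combination -h')) hq1
    · have hn : (-q) * ((1 - u : ℝ) : ℂ) = 1 := by linear_combination -h'
      exact absurd (neg_eq_iff_eq_neg.mp (eq_inv_of_mul_eq_one_left hn)) hq2
  · -- determinant branch
    have hA : (G.adjMatrix ℝ).IsHermitian := by
      show (G.adjMatrix ℝ)ᴴ = G.adjMatrix ℝ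
      ext i j
      simp [Matrix.conjTranspose_apply, SimpleGraph.adjMatrix_apply, SimpleGraph.adj_comm]
    set φ : ℝ →+* ℂ := Complex.ofRealHom with hφ
    have hmap : (G.adjMatrix ℝ).map φ = G.adjMatrix ℂ := by
      ext i j
      simp [SimpleGraph.adjMatrix_apply, apply_ite φ, hφ]
    set U : Matrix V V ℝ := (hA.eigenvectorUnitary : Matrix V V ℝ) with hU
    have hUS : U * star U = 1 := Unitary.coe_mul_star_self _
    set lam : V → ℝ := hA.eigenvalues with hlam
    have hspec : G.adjMatrix ℝ = U * Matrix.diagonal lam * star U := by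
      have := hA.spectral_theorem
      simpa using this
    have hspecC : G.adjMatrix ℂ =
        U.map φ * Matrix.diagonal (fun i => ((lam i : ℝ) : ℂ)) * (star U).map φ := by
      rw [← hmap, hspec, Matrix.map_mul, Matrix.map_mul,
        Matrix.diagonal_map (map_zero φ)]
      rfl
    have hUC : U.map φ * (star U).map φ = 1 := by
      rw [← Matrix.map_mul, hUS, Matrix.map_one φ (map_zero φ) (map_one φ)]
    set s : ℂ := 1 + ((1 - u : ℝ) : ℂ) * (((t : ℝ) + u : ℝ) : ℂ) * q ^ 2 with hs
    set D : Matrix V V ℂ :=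
      Matrix.diagonal (fun i => s - q * ((lam i : ℝ) : ℂ)) with hD
    have hfact : s • (1 : Matrix V V ℂ) - q • G.adjMatrix ℂ = U.map φ * D * (star U).map φ := by
      have hDeq : D = s • (1 : Matrix V V ℂ) -
          q • Matrix.diagonal (fun i => ((lam i : ℝ) : ℂ)) := by
        ext i j
        by_cases hij : i = j <;>
          simp [hD, Matrix.diagonal_apply, hij]
      rw [hDeq, hspecC]
      rw [Matrix.mul_sub, Matrix.sub_mul, Matrix.mul_smul, Matrix.mul_smul,
        Matrix.smul_mul, Matrix.smul_mul, Matrix.mul_one, hUC]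
    rw [hfact, Matrix.det_mul, Matrix.det_mul] at h
    have hne : (U.map φ).det * ((star U).map φ).det = 1 := by
      rw [← Matrix.det_mul, hUC, Matrix.det_one]
    have hD0 : D.det = 0 := by
      calc D.det = ((U.map φ).det * ((star U).map φ).det) * D.det := by rw [hne, one_mul]
        _ = (U.map φ).det * D.det * ((star U).map φ).det := by ring
        _ = 0 := h
    rw [hD, Matrix.det_diagonal] at hD0
    obtain ⟨i, -, hi⟩ := Finset.prod_eq_zero_iff.mp hD0
    -- hi : s - q * (lam i : ℂ) = 0
    set r : ℝ := lam i with hr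
    have hx : ∃ x : V → ℝ, x ≠ 0 ∧ G.adjMatrix ℝ *ᵥ x = r • x := by
      refine ⟨⇑(hA.eigenvectorBasis i), ?_, hA.mulVec_eigenvectorBasis i⟩
      intro hc
      apply hA.eigenvectorBasis.orthonormal.ne_zero i
      ext j
      exact congrFun hc j
    by_cases hrt : r = (t : ℝ) + 1
    · have h0' : ((1 : ℂ) - ((1 - u : ℝ) : ℂ) * q) *
          ((1 : ℂ) - (((t : ℝ) + u : ℝ) : ℂ) * q) = 0 := by
        rw [hrt] at hi
        rw [hs] at hi
        push_cast at hi ⊢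
        linear_combination hi
      rcases mul_eq_zero.mp h0' with h' | h'
      · exact absurd (eq_inv_of_mul_eq_one_left (by linear_combination -h')) hq1
      · exact absurd (eq_inv_of_mul_eq_one_left (by linear_combination -h')) hq3
    · have hr2 : r ^ 2 < 4 * (1 - u) * ((t : ℝ) + u) := heig r hx hrt
      set c : ℝ := (1 - u) * ((t : ℝ) + u) with hc
      have hcpos : 0 < c := hpos
      have hic : 1 + (c : ℂ) * q ^ 2 - q * (r : ℂ) = 0 := by
        rw [hs] at hi
        rw [hc]
        push_cast at hi ⊢
        linear_combination hi
      have hic' : 1 + (c : ℂ) * (starRingEnd ℂ q) ^ 2 - (starRingEnd ℂ q) * (r : ℂ) = 0 := by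
        have h' := congrArg (starRingEnd ℂ) hic
        simpa [map_add, map_sub, _root_.map_mul, map_pow, Complex.conj_ofReal] using h'
      by_cases hcq : (starRingEnd ℂ) q = q
      · exfalso
        have hqre : q = ((q.re : ℝ) : ℂ) := (Complex.conj_eq_iff_re.mp hcq).symm
        set x : ℝ := q.re with hxdef
        have hxr : (1 : ℝ) + c * x ^ 2 - x * r = 0 := by
          have h' := hic
          rw [hqre] at h'
          exact_mod_cast h'
        nlinarith [sq_nonneg (2 * c * x - r), hcpos, hr2]
      · have hsub : (q - starRingEnd ℂ q) *
            ((c : ℂ) * (q + starRingEnd ℂ q) - (r : ℂ)) = 0 := by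
          linear_combination hic - hic'
        have h2 : (c : ℂ) * (q + starRingEnd ℂ q) = (r : ℂ) := by
          rcases mul_eq_zero.mp hsub with h' | h'
          · exact absurd (sub_eq_zero.mp h').symm hcq
          · exact sub_eq_zero.mp h'
        have h3 : (c : ℂ) * (q * starRingEnd ℂ q) = 1 := by
          linear_combination q * h2 - hic
        rw [Complex.mul_conj] at h3
        have h4 : c * Complex.normSq q = 1 := by exact_mod_cast h3
        have h5 : Complex.normSq q = c⁻¹ :=
          eq_inv_of_mul_eq_one_left (by rw [mul_comm]; exact h4)
        rw [Complex.norm_def, h5, Real.sqrt_inv]
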